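/- Let Y₁, Y₂, … be a sequence of independent real random variables and define Xₙ = Σ_{i=1}^{n} Yᵢ for n ∈ ℕ. Let 𝒮 ⊆ ℝ and let 𝒱 : 𝒮 × ℕ → ℝ be a function such that E[exp(s Xₙ)] ≤ exp(𝒱(s, n)) for all s ∈ 𝒮 and n ∈ ℕ. Then for every γ ∈ ℝ, every m ∈ ℕ, and every s ∈ 𝒮: Pr{ ∃ n ∈ ℕ, s(Xₙ − γ) − 𝒱(s, n) + 𝒱(s, m) ≥ 0 } ≤ exp(𝒱(s, m) − γ s). -/

import Mathlib

open MeasureTheory ProbabilityTheory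

lemma aux_indep {Ω : Type*} [MeasurableSpace Ω] {μ : Measure Ω}
    {Y : ℕ → Ω → ℝ} (hYm : ∀ i, Measurable (Y i))
    (hindep : iIndepFun Y μ) (s : ℝ) (n N : ℕ)
    (φ : ({i // i ∈ Finset.range n} → ℝ) → ℝ) (hφ : Measurable φ) :
    IndepFun (fun ω => φ (fun i => Y i ω))
      (fun ω => Real.exp (s * ∑ i ∈ Finset.Ico n N, Y i ω)) μ := by
  have hdisj : Disjoint (Finset.range n) (Finset.Ico n N) := by
    simp only [Finset.disjoint_left, Finset.mem_range, Finset.mem_Ico]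
    omega
  have h := hindep.indepFun_finset (Finset.range n) (Finset.Ico n N) hdisj hYm
  have hψ : Measurable (fun y : {i // i ∈ Finset.Ico n N} → ℝ =>
      Real.exp (s * ∑ i, y i)) := by
    exact Real.measurable_exp.comp ((Finset.measurable_sum _
      (fun i _ => measurable_pi_apply i)).const_mul s)
  have h2 := h.comp hφ hψ
  have : (fun ω => Real.exp (s * ∑ i ∈ Finset.Ico n N, Y i ω))
      = (fun y : {i // i ∈ Finset.Ico n N} → ℝ => Real.exp (s * ∑ i, y i)) ∘
        (fun ω (i : {i // i ∈ Finset.Ico n N}) => Y i ω) := by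
    funext ω
    simp only [Function.comp_apply]
    rw [Finset.sum_coe_sort (Finset.Ico n N) (fun i => Y i ω)]
  rw [this]
  exact h2

/-- Uniform exponential inequality for sums of independent random variables whose moment
generating functions are bounded by `exp (𝒱 (s, n))`: for every `γ`, `m ≥ 1` and `s ∈ S`,
`Pr{∃ n ≥ 1, s (Xₙ - γ) - 𝒱(s,n) + 𝒱(s,m) ≥ 0} ≤ exp (𝒱(s,m) - γ s)`, where
`Xₙ = Y₁ + ⋯ + Yₙ`. -/
theorem statement7 {Ω : Type*} [MeasurableSpace Ω] (μ : Measure Ω) [IsProbabilityMeasure μ]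
    (Y : ℕ → Ω → ℝ) (hYm : ∀ i, Measurable (Y i))
    (hindep : iIndepFun Y μ)
    (S : Set ℝ) (V : ℝ → ℕ → ℝ)
    (hint : ∀ s ∈ S, ∀ n : ℕ, 1 ≤ n →
      Integrable (fun ω => Real.exp (s * ∑ i ∈ Finset.range n, Y i ω)) μ)
    (hV : ∀ s ∈ S, ∀ n : ℕ, 1 ≤ n →
      (∫ ω, Real.exp (s * ∑ i ∈ Finset.range n, Y i ω) ∂μ) ≤ Real.exp (V s n))
    (γ : ℝ) (m : ℕ) (hm : 1 ≤ m) (s : ℝ) (hs : s ∈ S) :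
    μ {ω | ∃ n : ℕ, 1 ≤ n ∧
        0 ≤ s * ((∑ i ∈ Finset.range n, Y i ω) - γ) - V s n + V s m}
      ≤ ENNReal.ofReal (Real.exp (V s m - γ * s)) := by
  classical
  set K : ℝ := Real.exp (V s m - γ * s) with hK
  set c : ℝ := Real.exp (γ * s - V s m) with hc
  have hcpos : 0 < c := Real.exp_pos _
  have hcK : c * K = 1 := by
    rw [hc, hK, ← Real.exp_add]
    rw [show γ * s - V s m + (V s m - γ * s) = 0 by ring, Real.exp_zero]
  set X : ℕ → Ω → ℝ := fun n ω => ∑ i ∈ Finset.range n, Y i ω with hXdef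
  have hXm : ∀ n, Measurable (X n) := fun n => Finset.measurable_sum _ (fun i _ => hYm i)
  set A : ℕ → Set Ω := fun n => {ω | 1 ≤ n ∧ 0 ≤ s * (X n ω - γ) - V s n + V s m} with hAdef
  have hAm : ∀ n, MeasurableSet (A n) := by
    intro n
    by_cases h : 1 ≤ n
    · have : A n = {ω | 0 ≤ s * (X n ω - γ) - V s n + V s m} := by
        ext ω; simp [hAdef, h]
      rw [this]
      exact measurableSet_le measurable_const
        ((((hXm n).sub measurable_const).const_mul s).sub measurable_const |>.add
          measurable_const)
    · have : A n = ∅ := by ext ω; simp [hAdef, h]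
      rw [this]; exact MeasurableSet.empty
  set B : ℕ → Set Ω := fun n => A n \ ⋃ k ∈ Set.Iio n, A k with hBdef
  have hBm : ∀ n, MeasurableSet (B n) :=
    fun n => (hAm n).diff (MeasurableSet.biUnion (Set.to_countable _) (fun k _ => hAm k))
  have hBsub : ∀ n, B n ⊆ A n := fun n => Set.diff_subset
  have hkey : ∀ i j, i < j → Disjoint (B i) (B j) := by
    intro i j h
    rw [Set.disjoint_left]
    intro ω hωi hωj
    exact hωj.2 (Set.mem_biUnion h (hBsub i hωi))
  have hBdisj : Pairwise (Function.onFun Disjoint B) := by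
    intro i j hij
    rcases hij.lt_or_gt with h | h
    · exact hkey _ _ h
    · exact (hkey _ _ h).symm
  have hUnion : {ω | ∃ n : ℕ, 1 ≤ n ∧ 0 ≤ s * (X n ω - γ) - V s n + V s m}
      = ⋃ n, B n := by
    ext ω
    simp only [Set.mem_setOf_eq, Set.mem_iUnion]
    constructor
    · rintro ⟨n, hn1, hn2⟩
      have hex : ∃ k, ω ∈ A k := ⟨n, hn1, hn2⟩
      refine ⟨Nat.find hex, Nat.find_spec hex, ?_⟩
      intro hmem
      obtain ⟨k, hk, hωk⟩ := Set.mem_iUnion₂.1 hmem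
      exact Nat.find_min hex hk hωk
    · rintro ⟨n, hn⟩
      exact ⟨n, (hBsub n hn).1, (hBsub n hn).2⟩
  have hB0 : B 0 = ∅ := by
    apply Set.eq_empty_of_subset_empty
    intro ω hω
    exact absurd (hBsub 0 hω).1 (by omega)
  -- partial sums of the tuple of the first `n` variables
  have main : ∀ N : ℕ, ∑ n ∈ Finset.range N, (μ (B n)).toReal ≤ K := by
    intro N
    rcases Nat.eq_zero_or_pos N with rfl | hN
    · simp [hK, (Real.exp_pos _).le]
    set EN : ℝ := ∫ ω, Real.exp (s * X N ω) ∂μ with hEN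
    have hintN : Integrable (fun ω => Real.exp (s * X N ω)) μ := hint s hs N hN
    have hENpos : 0 < EN := integral_exp_pos hintN
    have perpoint : ∀ n ∈ Finset.range N,
        c * EN * (μ (B n)).toReal ≤ ∫ ω in B n, Real.exp (s * X N ω) ∂μ := by
      intro n hnN'
      rw [Finset.mem_range] at hnN'
      rcases Nat.eq_zero_or_pos n with rfl | hn1
      · simp [hB0]
      -- 1 ≤ n < N
      set psk : ℕ → ({i // i ∈ Finset.range n} → ℝ) → ℝ :=
        fun k y => ∑ i : {i // i ∈ Finset.range n}, if (i : ℕ) < k then y i else 0 with hpsk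
      have hpskm : ∀ k, Measurable (psk k) := by
        intro k
        apply Finset.measurable_sum
        intro i _
        by_cases h : (i : ℕ) < k
        · simpa [h] using measurable_pi_apply i
        · simpa [h] using (measurable_const : Measurable fun _ :
            ({i // i ∈ Finset.range n} → ℝ) => (0 : ℝ))
      set YT : Ω → {i // i ∈ Finset.range n} → ℝ := fun ω i => Y i ω with hYT
      have hps : ∀ (k : ℕ), k ≤ n → ∀ ω, psk k (YT ω) = X k ω := by
        intro k hk ω
        rw [hpsk]
        simp only
        rw [Finset.sum_coe_sort (Finset.range n) (fun i => if i < k then Y i ω else 0)]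
        rw [← Finset.sum_filter]
        congr 1
        ext i
        simp only [Finset.mem_filter, Finset.mem_range]
        omega
      set QA : Set ({i // i ∈ Finset.range n} → ℝ) :=
        {y | 1 ≤ n ∧ 0 ≤ s * (psk n y - γ) - V s n + V s m} \
          ⋃ k ∈ Set.Iio n, {y | 1 ≤ k ∧ 0 ≤ s * (psk k y - γ) - V s k + V s m} with hQA
      have hQAm : MeasurableSet QA := by
        have hone : ∀ k : ℕ, MeasurableSet
            {y : {i // i ∈ Finset.range n} → ℝ |
              1 ≤ k ∧ 0 ≤ s * (psk k y - γ) - V s k + V s m} := by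
          intro k
          by_cases h : 1 ≤ k
          · have : {y : {i // i ∈ Finset.range n} → ℝ |
                1 ≤ k ∧ 0 ≤ s * (psk k y - γ) - V s k + V s m}
                = {y | 0 ≤ s * (psk k y - γ) - V s k + V s m} := by
              ext y; simp [h]
            rw [this]
            exact measurableSet_le measurable_const
              ((((hpskm k).sub measurable_const).const_mul s).sub measurable_const |>.add
                measurable_const)
          · have : {y : {i // i ∈ Finset.range n} → ℝ |
                1 ≤ k ∧ 0 ≤ s * (psk k y - γ) - V s k + V s m} = ∅ := by
              ext y; simp [h]
            rw [this]; exact MeasurableSet.empty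
        exact (hone n).diff (MeasurableSet.biUnion (Set.to_countable _) fun k _ => hone k)
      have hmemQA : ∀ ω, (YT ω ∈ QA) ↔ ω ∈ B n := by
        intro ω
        have hone : ∀ k : ℕ, k ≤ n →
            ((YT ω ∈ {y : {i // i ∈ Finset.range n} → ℝ |
              1 ≤ k ∧ 0 ≤ s * (psk k y - γ) - V s k + V s m}) ↔ ω ∈ A k) := by
          intro k hk
          simp only [Set.mem_setOf_eq, hAdef, hps k hk ω]
        rw [hQA, hBdef]
        simp only [Set.mem_diff, Set.mem_iUnion, Set.mem_Iio, exists_prop]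
        constructor
        · rintro ⟨h1, h2⟩
          refine ⟨(hone n le_rfl).1 h1, ?_⟩
          rintro ⟨k, hk, hωk⟩
          exact h2 ⟨k, hk, (hone k hk.le).2 hωk⟩
        · rintro ⟨h1, h2⟩
          refine ⟨(hone n le_rfl).2 h1, ?_⟩
          rintro ⟨k, hk, hωk⟩
          exact h2 ⟨k, hk, (hone k hk.le).1 hωk⟩
      set G : Ω → ℝ := fun ω => Real.exp (s * ∑ i ∈ Finset.Ico n N, Y i ω) with hG
      have hGm : Measurable G := Real.measurable_exp.comp
        ((Finset.measurable_sum _ (fun i _ => hYm i)).const_mul s)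
      set F : Ω → ℝ := Set.indicator (B n) (fun ω => Real.exp (s * X n ω)) with hF
      have hFm : Measurable F :=
        (Real.measurable_exp.comp ((hXm n).const_mul s)).indicator (hBm n)
      -- independence
      have indep1 : IndepFun F G μ := by
        have hφm : Measurable (Set.indicator QA
            (fun y => Real.exp (s * psk n y))) :=
          (Real.measurable_exp.comp ((hpskm n).const_mul s)).indicator hQAm
        have h := aux_indep hYm hindep s n N _ hφm
        have hFeq : F = fun ω => Set.indicator QA
            (fun y => Real.exp (s * psk n y)) (YT ω) := by
          funext ω
          rw [hF]
          by_cases hω : ω ∈ B n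
          · rw [Set.indicator_of_mem hω, Set.indicator_of_mem ((hmemQA ω).2 hω),
              hps n le_rfl ω]
          · rw [Set.indicator_of_notMem hω,
              Set.indicator_of_notMem (fun hmem => hω ((hmemQA ω).1 hmem))]
        rw [hFeq]
        exact h
      have indep2 : IndepFun (fun ω => Real.exp (s * X n ω)) G μ := by
        have hφm : Measurable (fun y : {i // i ∈ Finset.range n} → ℝ =>
            Real.exp (s * psk n y)) := Real.measurable_exp.comp ((hpskm n).const_mul s)
        have h := aux_indep hYm hindep s n N _ hφm
        have heq : (fun ω => Real.exp (s * X n ω))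
            = fun ω => Real.exp (s * psk n (YT ω)) := by
          funext ω; rw [hps n le_rfl ω]
        rw [heq]
        exact h
      set I₂ : ℝ := ∫ ω, G ω ∂μ with hI₂
      have hI₂nn : 0 ≤ I₂ := integral_nonneg fun ω => (Real.exp_pos _).le
      have hXsplit : ∀ ω, Real.exp (s * X n ω) * G ω = Real.exp (s * X N ω) := by
        intro ω
        rw [hG]
        simp only
        rw [← Real.exp_add, ← mul_add]
        congr 2
        rw [hXdef]
        simp only
        rw [Finset.range_eq_Ico, Finset.range_eq_Ico]
        exact Finset.sum_Ico_consecutive _ (Nat.zero_le n) hnN'.le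
      have hmul2 : EN = (∫ ω, Real.exp (s * X n ω) ∂μ) * I₂ := by
        have := indep2.integral_mul_eq_mul_integral
          (Real.measurable_exp.comp ((hXm n).const_mul s)).aestronglyMeasurable
          hGm.aestronglyMeasurable
        rw [hEN, ← this]
        congr 1
        funext ω
        exact (hXsplit ω).symm
      have hmul1 : ∫ ω, (F * G) ω ∂μ = (∫ ω, F ω ∂μ) * I₂ :=
        indep1.integral_mul_eq_mul_integral hFm.aestronglyMeasurable hGm.aestronglyMeasurable
      have hFG : (F * G) = Set.indicator (B n) (fun ω => Real.exp (s * X N ω)) := by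
        funext ω
        simp only [Pi.mul_apply, hF]
        by_cases hω : ω ∈ B n
        · rw [Set.indicator_of_mem hω, Set.indicator_of_mem hω, hXsplit ω]
        · rw [Set.indicator_of_notMem hω, Set.indicator_of_notMem hω, zero_mul]
      have hsetint : ∫ ω in B n, Real.exp (s * X N ω) ∂μ = (∫ ω, F ω ∂μ) * I₂ := by
        rw [← hmul1, hFG, integral_indicator (hBm n)]
      -- lower bound on ∫ F
      have hEn : ∫ ω, Real.exp (s * X n ω) ∂μ ≤ Real.exp (V s n) := hV s hs n hn1
      have hFlb : c * (∫ ω, Real.exp (s * X n ω) ∂μ) * (μ (B n)).toReal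
          ≤ ∫ ω, F ω ∂μ := by
        rw [hF, integral_indicator (hBm n)]
        apply setIntegral_ge_of_const_le_real (hBm n) (measure_ne_top μ _)
        · intro ω hω
          have h2 := (hBsub n hω).2
          rw [mul_sub] at h2
          have h3 : γ * s - V s m + V s n ≤ s * X n ω := by linarith [mul_comm γ s]
          calc c * ∫ ω, Real.exp (s * X n ω) ∂μ ≤ c * Real.exp (V s n) := by
                exact mul_le_mul_of_nonneg_left hEn hcpos.le
            _ = Real.exp (γ * s - V s m + V s n) := by rw [hc, ← Real.exp_add]
            _ ≤ Real.exp (s * X n ω) := Real.exp_le_exp.2 h3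
        · exact (hint s hs n hn1).integrableOn
      calc c * EN * (μ (B n)).toReal
          = (c * (∫ ω, Real.exp (s * X n ω) ∂μ) * (μ (B n)).toReal) * I₂ := by
            rw [hmul2]; ring
        _ ≤ (∫ ω, F ω ∂μ) * I₂ := mul_le_mul_of_nonneg_right hFlb hI₂nn
        _ = ∫ ω in B n, Real.exp (s * X N ω) ∂μ := hsetint.symm
    -- sum the per-point bounds
    have hsum : ∑ n ∈ Finset.range N, ∫ ω in B n, Real.exp (s * X N ω) ∂μ ≤ EN := by
      rw [← integral_biUnion_finset (Finset.range N) (fun i _ => hBm i)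
        (fun i _ j _ hij => hBdisj hij) (fun i _ => hintN.integrableOn)]
      exact setIntegral_le_integral hintN (ae_of_all _ fun ω => (Real.exp_pos _).le)
    have htotal : c * EN * ∑ n ∈ Finset.range N, (μ (B n)).toReal ≤ EN := by
      calc c * EN * ∑ n ∈ Finset.range N, (μ (B n)).toReal
          = ∑ n ∈ Finset.range N, c * EN * (μ (B n)).toReal := by rw [Finset.mul_sum]
        _ ≤ ∑ n ∈ Finset.range N, ∫ ω in B n, Real.exp (s * X N ω) ∂μ :=
            Finset.sum_le_sum perpoint
        _ ≤ EN := hsum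
    nlinarith [mul_pos hcpos hENpos,
      Finset.sum_nonneg (fun n (_ : n ∈ Finset.range N) => ENNReal.toReal_nonneg
        (a := μ (B n)))]
  -- conclude in ℝ≥0∞
  rw [show {ω | ∃ n : ℕ, 1 ≤ n ∧
      0 ≤ s * ((∑ i ∈ Finset.range n, Y i ω) - γ) - V s n + V s m} = ⋃ n, B n from hUnion]
  rw [measure_iUnion hBdisj hBm]
  rw [ENNReal.tsum_eq_iSup_sum]
  apply iSup_le
  intro F
  calc ∑ n ∈ F, μ (B n) ≤ ∑ n ∈ Finset.range (F.sup id + 1), μ (B n) := by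
        apply Finset.sum_le_sum_of_subset
        intro i hi
        rw [Finset.mem_range]
        exact Nat.lt_succ_of_le (Finset.le_sup (f := id) hi)
    _ = ENNReal.ofReal (∑ n ∈ Finset.range (F.sup id + 1), (μ (B n)).toReal) := by
        rw [ENNReal.ofReal_sum_of_nonneg (fun i _ => ENNReal.toReal_nonneg)]
        exact Finset.sum_congr rfl fun i _ => (ENNReal.ofReal_toReal (measure_ne_top μ _)).symm
    _ ≤ ENNReal.ofReal K := ENNReal.ofReal_le_ofReal (main _)
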